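/- Let r > 0, d > r and s ≥ 0. Define the trajectories p(t) = (−(d + s·t), 0) and q(t) = (d + s·t, 0) for t ≥ 0, with the robot at p(t) having heading (1, 0) and the robot at q(t) having heading (−1, 0). Then for every t ≥ 0: (i) q(t) lies on the ray {p(t) + τ·(1, 0) : τ ≥ 0} and p(t) lies on the ray {q(t) + τ·(−1, 0) : τ ≥ 0}, so each robot's forward ray meets the other's disk; (ii) dist(p(t), q(t)) = 2(d + s·t) > 2r; and (iii) the union of the closed disks of radius r centered at p(t) and q(t) is not connected. -/

import Mathlib

open Metric

noncomputable def pt (a b : ℝ) : EuclideanSpace ℝ (Fin 2) := WithLp.toLp 2 ![a, b]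

lemma pt_add_smul (a b c : ℝ) : pt a 0 + c • pt b 0 = pt (a + c * b) 0 := by
  ext i
  fin_cases i <;> simp [pt]

lemma dist_pt (a b : ℝ) : dist (pt a 0) (pt b 0) = |a - b| := by
  rw [EuclideanSpace.dist_eq]
  simp [pt, Fin.sum_univ_two, Real.sqrt_sq_eq_abs, Real.dist_eq]

theorem facing_backwards_never_aggregate (r d s : ℝ) (hr : 0 < r) (hd : d > r) (hs : 0 ≤ s) :
    ∀ t : ℝ, 0 ≤ t →
      (∃ τ : ℝ, 0 ≤ τ ∧ pt (-(d + s * t)) 0 + τ • pt 1 0 = pt (d + s * t) 0) ∧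
      (∃ τ : ℝ, 0 ≤ τ ∧ pt (d + s * t) 0 + τ • pt (-1) 0 = pt (-(d + s * t)) 0) ∧
      dist (pt (-(d + s * t)) 0) (pt (d + s * t) 0) = 2 * (d + s * t) ∧
      2 * (d + s * t) > 2 * r ∧
      ¬ IsConnected (closedBall (pt (-(d + s * t)) 0) r ∪ closedBall (pt (d + s * t) 0) r) := by
  intro t ht
  set m := d + s * t with hm
  have hmr : r < m := lt_of_lt_of_le hd (le_add_of_nonneg_right (mul_nonneg hs ht))
  have hm0 : 0 < m := hr.trans hmr
  have hdist : dist (pt (-m) 0) (pt m 0) = 2 * m := by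
    rw [dist_pt]; rw [abs_of_nonpos (by linarith)]; ring
  refine ⟨⟨2 * m, by linarith, ?_⟩, ⟨2 * m, by linarith, ?_⟩, hdist, by linarith, ?_⟩
  · rw [pt_add_smul]; ring_nf
  · rw [pt_add_smul]; ring_nf
  · rintro ⟨hne, hconn⟩
    have hsub : closedBall (pt (-m) 0) r ∪ closedBall (pt m 0) r ⊆
        ball (pt (-m) 0) m ∪ ball (pt m 0) m :=
      Set.union_subset_union (closedBall_subset_ball hmr) (closedBall_subset_ball hmr)
    have hdisj : (closedBall (pt (-m) 0) r ∪ closedBall (pt m 0) r) ∩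
        (ball (pt (-m) 0) m ∩ ball (pt m 0) m) = ∅ := by
      ext x
      simp only [Set.mem_inter_iff, Set.mem_empty_iff_false, iff_false, not_and, mem_ball]
      intro _ h1 h2
      have := dist_triangle (pt (-m) 0) x (pt m 0)
      rw [hdist, dist_comm (pt (-m) 0) x] at this
      linarith
    have h1 : ((closedBall (pt (-m) 0) r ∪ closedBall (pt m 0) r) ∩
        ball (pt (-m) 0) m).Nonempty :=
      ⟨pt (-m) 0, Set.mem_union_left _ (mem_closedBall_self hr.le), mem_ball_self hm0⟩
    have h2 : ((closedBall (pt (-m) 0) r ∪ closedBall (pt m 0) r) ∩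
        ball (pt m 0) m).Nonempty :=
      ⟨pt m 0, Set.mem_union_right _ (mem_closedBall_self hr.le), mem_ball_self hm0⟩
    have := hconn _ _ isOpen_ball isOpen_ball hsub h1 h2
    obtain ⟨x, hxu, hxS⟩ := this
    exact Set.eq_empty_iff_forall_notMem.mp hdisj x ⟨hxu, hxS⟩
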